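/- Let k ≥ 1, D ≥ 1 be integers, let M⁰,…,M^{D−1} be constant skew-symmetric real k×k matrices, let H : ℝ^k → ℝ be twice continuously differentiable, and let ζ : ℝ × ℝ × ℝ^D → ℝ^k, (s,r,x) ↦ ζ(s,r,x), be twice continuously differentiable and satisfy the De Donder–Weyl–Hamilton equation Σ_{μ=0}^{D−1} M^μ · ∂ζ/∂x^μ (s,r,x) = ∇H(ζ(s,r,x)) for all (s,r,x). Then the multi-symplectic structure is locally conserved along the flow: for all (s,r,x), Σ_{μ=0}^{D−1} ∂/∂x^μ ⟨ M^μ · ∂_s ζ(s,r,x), ∂_r ζ(s,r,x) ⟩ = 0, where ⟨·,·⟩ is the Euclidean inner product on ℝ^k. -/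

import Mathlib

open Matrix

/-- Auxiliary: a continuous linear functional can be recovered from its values on
the standard basis vectors. -/
private lemma clm_sum_single {k : ℕ} (L : (Fin k → ℝ) →L[ℝ] ℝ) (c : Fin k → ℝ) :
    ∑ i, c i * L (Pi.single i 1) = L c := by
  have h : c = ∑ i, c i • (Pi.single i (1:ℝ) : Fin k → ℝ) := by
    funext j; simp [Finset.sum_apply, Pi.single_apply]
  conv_rhs => rw [h]
  simp [smul_eq_mul]

set_option maxHeartbeats 1000000 in
/-- **Local conservation of the multi-symplectic structure.**
For a Hamiltonian PDE in the abstract De Donder–Weyl–Hamilton form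
`∑ μ, M^μ · ∂ζ/∂x^μ = ∇H(ζ)` with constant skew-symmetric matrices `M^μ`,
the multi-symplectic 2-forms `ω^μ(a,b) = ⟨M^μ a, b⟩`, evaluated on the two
variation fields `∂_s ζ` and `∂_r ζ` of a two-parameter family of solutions,
satisfy `∑ μ, ∂_μ ω^μ(∂_s ζ, ∂_r ζ) = 0`. -/
theorem multisymplectic_structure_locally_conserved
    (k D : ℕ) (hk : 1 ≤ k) (hD : 1 ≤ D)
    (M : Fin D → Matrix (Fin k) (Fin k) ℝ)
    (hM : ∀ μ, (M μ)ᵀ = -(M μ))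
    (H : (Fin k → ℝ) → ℝ) (hH : ContDiff ℝ 2 H)
    (ζ : ℝ × ℝ × (Fin D → ℝ) → (Fin k → ℝ)) (hζ : ContDiff ℝ 2 ζ)
    (heq : ∀ q : ℝ × ℝ × (Fin D → ℝ),
      ∑ μ, (M μ).mulVec (fderiv ℝ ζ q (0, 0, Pi.single μ 1))
        = fun i => fderiv ℝ H (ζ q) (Pi.single i 1)) :
    ∀ q : ℝ × ℝ × (Fin D → ℝ),
      ∑ μ, fderiv ℝ
        (fun q' => ∑ i,
          (M μ).mulVec (fderiv ℝ ζ q' (1, 0, 0)) i * fderiv ℝ ζ q' (0, 1, 0) i)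
        q (0, 0, Pi.single μ 1) = 0 := by
  intro q
  classical
  have hζd : Differentiable ℝ ζ := hζ.differentiable two_ne_zero
  have hHd : Differentiable ℝ H := hH.differentiable two_ne_zero
  have hζ1 : ContDiff ℝ 1 (fderiv ℝ ζ) := hζ.fderiv_right (by norm_num)
  have hH1 : ContDiff ℝ 1 (fderiv ℝ H) := hH.fderiv_right (by norm_num)
  have hD2 : HasFDerivAt (fderiv ℝ ζ) (fderiv ℝ (fderiv ℝ ζ) q) q :=
    ((hζ1.differentiable one_ne_zero) q).hasFDerivAt
  have hD2H : HasFDerivAt (fderiv ℝ H) (fderiv ℝ (fderiv ℝ H) (ζ q)) (ζ q) :=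
    ((hH1.differentiable one_ne_zero) (ζ q)).hasFDerivAt
  have hζq : HasFDerivAt ζ (fderiv ℝ ζ q) q := (hζd q).hasFDerivAt
  set D2 : (ℝ × ℝ × (Fin D → ℝ)) →L[ℝ] (ℝ × ℝ × (Fin D → ℝ)) →L[ℝ] (Fin k → ℝ) :=
    fderiv ℝ (fderiv ℝ ζ) q with hD2def
  set D2H : (Fin k → ℝ) →L[ℝ] (Fin k → ℝ) →L[ℝ] ℝ :=
    fderiv ℝ (fderiv ℝ H) (ζ q) with hD2Hdef
  have hsym : ∀ a b, D2 a b = D2 b a := fun a b =>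
    second_derivative_symmetric (fun y => (hζd y).hasFDerivAt) hD2 a b
  have hsymH : ∀ a b, D2H a b = D2H b a := fun a b =>
    second_derivative_symmetric (fun y => (hHd y).hasFDerivAt) hD2H a b
  -- the continuous linear functional  y ↦ ((M μ) *ᵥ y) i
  set ψ : Fin D → Fin k → ((Fin k → ℝ) →L[ℝ] ℝ) := fun μ i =>
    (ContinuousLinearMap.proj i).comp
      (LinearMap.toContinuousLinearMap ((M μ).mulVecLin)) with hψdef
  have hψ : ∀ μ i y, ψ μ i y = (M μ).mulVec y i := by
    intro μ i y
    simp [hψdef]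
  -- derivative of q' ↦ fderiv ℝ ζ q' w
  have hA : ∀ w : ℝ × ℝ × (Fin D → ℝ),
      HasFDerivAt (fun q' => fderiv ℝ ζ q' w)
        ((ContinuousLinearMap.apply ℝ (Fin k → ℝ) w).comp D2) q := fun w =>
    (ContinuousLinearMap.apply ℝ (Fin k → ℝ) w).hasFDerivAt.comp q hD2
  -- derivative of q' ↦ ((M μ) *ᵥ fderiv ℝ ζ q' w) i
  have ha : ∀ (μ : Fin D) (i : Fin k) (w : ℝ × ℝ × (Fin D → ℝ)),
      HasFDerivAt (fun q' => (M μ).mulVec (fderiv ℝ ζ q' w) i)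
        ((ψ μ i).comp ((ContinuousLinearMap.apply ℝ (Fin k → ℝ) w).comp D2)) q := by
    intro μ i w
    have h1 := (ψ μ i).hasFDerivAt.comp q (hA w)
    have h2 : (fun q' => (M μ).mulVec (fderiv ℝ ζ q' w) i)
        = fun q' => ψ μ i (fderiv ℝ ζ q' w) := by
      funext q'; rw [hψ]
    rw [h2]
    exact h1
  -- derivative of q' ↦ fderiv ℝ ζ q' w i
  have hb : ∀ (i : Fin k) (w : ℝ × ℝ × (Fin D → ℝ)),
      HasFDerivAt (fun q' => fderiv ℝ ζ q' w i)
        ((ContinuousLinearMap.proj i).comp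
          ((ContinuousLinearMap.apply ℝ (Fin k → ℝ) w).comp D2)) q := by
    intro i w
    have h := (ContinuousLinearMap.proj (R := ℝ) (φ := fun _ : Fin k => ℝ)
      i).hasFDerivAt.comp q (hA w)
    simpa [Function.comp_def] using h
  -- the key identity obtained by differentiating the field equation
  have hkey : ∀ (i : Fin k) (w : ℝ × ℝ × (Fin D → ℝ)),
      ∑ μ, (M μ).mulVec (D2 w (0, 0, Pi.single μ 1)) i
        = D2H (fderiv ℝ ζ q w) (Pi.single i 1) := by
    intro i w
    have hLf : HasFDerivAt
        (fun q' => ∑ μ, (M μ).mulVec (fderiv ℝ ζ q' (0, 0, Pi.single μ 1)) i)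
        (∑ μ, (ψ μ i).comp
          ((ContinuousLinearMap.apply ℝ (Fin k → ℝ) (0, 0, Pi.single μ 1)).comp D2)) q :=
      HasFDerivAt.fun_sum fun μ _ => ha μ i (0, 0, Pi.single μ 1)
    have hRf : HasFDerivAt (fun q' => fderiv ℝ H (ζ q') (Pi.single i 1))
        ((ContinuousLinearMap.apply ℝ ℝ (Pi.single i 1)).comp (D2H.comp (fderiv ℝ ζ q))) q := by
      have h := (ContinuousLinearMap.apply ℝ ℝ
        (Pi.single i 1)).hasFDerivAt.comp q (hD2H.comp q hζq)
      simpa [Function.comp_def] using h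
    have heqf : (fun q' => ∑ μ, (M μ).mulVec (fderiv ℝ ζ q' (0, 0, Pi.single μ 1)) i)
        = fun q' => fderiv ℝ H (ζ q') (Pi.single i 1) := by
      funext q'
      have h := congrFun (heq q') i
      simpa using h
    have huniq := (heqf ▸ hLf).unique hRf
    have := congrArg (fun (L : (ℝ × ℝ × (Fin D → ℝ)) →L[ℝ] ℝ) => L w) huniq
    simpa [hψ] using this
  -- compute the fderiv in the goal via the product rule
  have hprod : ∀ μ : Fin D, HasFDerivAt
      (fun q' => ∑ i,
        (M μ).mulVec (fderiv ℝ ζ q' (1, 0, 0)) i * fderiv ℝ ζ q' (0, 1, 0) i)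
      (∑ i, ((M μ).mulVec (fderiv ℝ ζ q (1, 0, 0)) i •
          ((ContinuousLinearMap.proj i).comp
            ((ContinuousLinearMap.apply ℝ (Fin k → ℝ) (0, 1, 0)).comp D2))
        + fderiv ℝ ζ q (0, 1, 0) i •
          ((ψ μ i).comp
            ((ContinuousLinearMap.apply ℝ (Fin k → ℝ) (1, 0, 0)).comp D2)))) q := by
    intro μ
    exact HasFDerivAt.fun_sum fun i _ => (ha μ i (1, 0, 0)).mul (hb i (0, 1, 0))
  have hfd : ∀ μ : Fin D, fderiv ℝ
      (fun q' => ∑ i,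
        (M μ).mulVec (fderiv ℝ ζ q' (1, 0, 0)) i * fderiv ℝ ζ q' (0, 1, 0) i)
      q (0, 0, Pi.single μ 1)
      = ∑ i, ((M μ).mulVec (fderiv ℝ ζ q (1, 0, 0)) i * D2 (0, 0, Pi.single μ 1) (0, 1, 0) i
        + fderiv ℝ ζ q (0, 1, 0) i * (M μ).mulVec (D2 (0, 0, Pi.single μ 1) (1, 0, 0)) i) := by
    intro μ
    rw [(hprod μ).fderiv]
    simp only [ContinuousLinearMap.sum_apply, ContinuousLinearMap.add_apply,
      ContinuousLinearMap.smul_apply, ContinuousLinearMap.coe_comp',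
      Function.comp_apply, ContinuousLinearMap.apply_apply,
      ContinuousLinearMap.proj_apply, smul_eq_mul, hψ]
  simp only [hfd]
  -- abbreviations
  set u : Fin k → ℝ := fderiv ℝ ζ q (1, 0, 0) with hu
  set v : Fin k → ℝ := fderiv ℝ ζ q (0, 1, 0) with hv
  -- use symmetry of the second derivative of ζ
  have hstep1 : ∀ μ : Fin D,
      (∑ i, ((M μ).mulVec u i * D2 (0, 0, Pi.single μ 1) (0, 1, 0) i
        + v i * (M μ).mulVec (D2 (0, 0, Pi.single μ 1) (1, 0, 0)) i))
      = (∑ i, (M μ).mulVec u i * D2 (0, 1, 0) (0, 0, Pi.single μ 1) i)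
        + ∑ i, v i * (M μ).mulVec (D2 (1, 0, 0) (0, 0, Pi.single μ 1)) i := by
    intro μ
    rw [Finset.sum_add_distrib, hsym (0, 0, Pi.single μ 1) (0, 1, 0),
      hsym (0, 0, Pi.single μ 1) (1, 0, 0)]
  simp only [hstep1]
  rw [Finset.sum_add_distrib]
  -- second part: ∑ μ ∑ i v i * (M μ *ᵥ D2 es (e μ)) i = D2H u v
  have hpart2 : ∑ μ, ∑ i, v i * (M μ).mulVec (D2 (1, 0, 0) (0, 0, Pi.single μ 1)) i
      = D2H u v := by
    rw [Finset.sum_comm]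
    have : ∀ i, ∑ μ, v i * (M μ).mulVec (D2 (1, 0, 0) (0, 0, Pi.single μ 1)) i
        = v i * D2H u (Pi.single i 1) := by
      intro i
      rw [← Finset.mul_sum, hkey i (1, 0, 0)]
    simp only [this]
    exact clm_sum_single (D2H u) v
  -- first part: ∑ μ ∑ i (M μ *ᵥ u) i * (D2 er (e μ)) i = - D2H v u
  have hpart1 : ∑ μ, ∑ i, (M μ).mulVec u i * D2 (0, 1, 0) (0, 0, Pi.single μ 1) i
      = -(D2H v u) := by
    have hskew : ∀ (μ : Fin D) (c : Fin k → ℝ),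
        ∑ i, (M μ).mulVec u i * c i = -∑ i, u i * (M μ).mulVec c i := by
      intro μ c
      have h1 : ((M μ) *ᵥ u) ⬝ᵥ c = u ⬝ᵥ ((M μ)ᵀ *ᵥ c) := by
        rw [Matrix.dotProduct_mulVec, Matrix.vecMul_transpose]
      have h2 : u ⬝ᵥ ((M μ)ᵀ *ᵥ c) = -(u ⬝ᵥ ((M μ) *ᵥ c)) := by
        rw [hM μ, Matrix.neg_mulVec, dotProduct_neg]
      simpa [dotProduct, Finset.sum_neg_distrib] using h1.trans h2
    calc ∑ μ, ∑ i, (M μ).mulVec u i * D2 (0, 1, 0) (0, 0, Pi.single μ 1) i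
        = ∑ μ, -∑ i, u i * (M μ).mulVec (D2 (0, 1, 0) (0, 0, Pi.single μ 1)) i := by
          exact Finset.sum_congr rfl fun μ _ => hskew μ _
      _ = -∑ μ, ∑ i, u i * (M μ).mulVec (D2 (0, 1, 0) (0, 0, Pi.single μ 1)) i := by
          rw [Finset.sum_neg_distrib]
      _ = -∑ i, ∑ μ, u i * (M μ).mulVec (D2 (0, 1, 0) (0, 0, Pi.single μ 1)) i := by
          rw [Finset.sum_comm]
      _ = -∑ i, u i * D2H v (Pi.single i 1) := by
          congr 1
          exact Finset.sum_congr rfl fun i _ => by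
            rw [← Finset.mul_sum, hkey i (0, 1, 0)]
      _ = -(D2H v u) := by rw [clm_sum_single (D2H v) u]
  rw [hpart1, hpart2, hsymH u v, neg_add_cancel]
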